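/- For 0 < μ < 1 and θ with arcsin μ < θ < π/2, define φ_e(θ) := 1/(sin²θ − μ²) − 1/(θ² − μ²). If θ_e ∈ (arcsin μ, π/2) is a critical point of φ_e (i.e. φ_e'(θ_e) = 0), then φ_e(θ_e) > 2/9. -/

import Mathlib

open Real

private lemma pos_on_Ioo {f f' : ℝ → ℝ} (hd : ∀ x : ℝ, HasDerivAt f (f' x) x) (h0 : f 0 = 0)
    (hpos : ∀ x ∈ Set.Ioo (0:ℝ) π, 0 < f' x) : ∀ x ∈ Set.Ioo (0:ℝ) π, 0 < f x := by
  intro x hx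
  have hmono : StrictMonoOn f (Set.Icc 0 π) := by
    apply strictMonoOn_of_deriv_pos (convex_Icc _ _)
    · exact fun y _ => (hd y).differentiableAt.continuousAt.continuousWithinAt
    · intro y hy
      rw [interior_Icc] at hy
      rw [(hd y).deriv]
      exact hpos y hy
  have := hmono (Set.left_mem_Icc.2 Real.pi_pos.le) ⟨hx.1.le, hx.2.le⟩ hx.1
  rwa [h0] at this

private lemma aux1 : ∀ x ∈ Set.Ioo (0:ℝ) π, 0 < x - Real.sin x := by
  apply pos_on_Ioo (f' := fun x => 1 - Real.cos x)
  · exact fun x => (hasDerivAt_id x).sub (Real.hasDerivAt_sin x)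
  · simp
  · intro x hx
    have : Real.cos x < Real.cos 0 := by
      apply Real.strictAntiOn_cos ⟨le_refl _, Real.pi_pos.le⟩ ⟨hx.1.le, hx.2.le⟩ hx.1
    rw [Real.cos_zero] at this
    linarith

private lemma aux2 : ∀ x ∈ Set.Ioo (0:ℝ) π, 0 < Real.cos x - (1 - x ^ 2 / 2) := by
  apply pos_on_Ioo (f' := fun x => x - Real.sin x)
  · intro x
    have h := (Real.hasDerivAt_cos x).sub ((hasDerivAt_const x (1:ℝ)).sub ((hasDerivAt_pow 2 x).div_const 2))
    refine h.congr_deriv ?_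
    push_cast
    ring
  · simp
  · exact aux1

private lemma aux3 : ∀ x ∈ Set.Ioo (0:ℝ) π, 0 < Real.sin x - (x - x ^ 3 / 6) := by
  apply pos_on_Ioo (f' := fun x => Real.cos x - (1 - x ^ 2 / 2))
  · intro x
    have h := (Real.hasDerivAt_sin x).sub
      ((hasDerivAt_id x).sub ((hasDerivAt_pow 3 x).div_const 6))
    refine h.congr_deriv ?_
    push_cast
    ring
  · simp
  · exact aux2

private lemma aux4 : ∀ x ∈ Set.Ioo (0:ℝ) π, 0 < (1 - x ^ 2 / 2 + x ^ 4 / 24) - Real.cos x := by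
  apply pos_on_Ioo (f' := fun x => Real.sin x - (x - x ^ 3 / 6))
  · intro x
    have h := (((hasDerivAt_const x (1:ℝ)).sub ((hasDerivAt_pow 2 x).div_const 2)).add
      ((hasDerivAt_pow 4 x).div_const 24)).sub (Real.hasDerivAt_cos x)
    refine h.congr_deriv ?_
    push_cast
    ring
  · simp
  · exact aux3

private lemma aux5 : ∀ x ∈ Set.Ioo (0:ℝ) π, 0 < (x - x ^ 3 / 6 + x ^ 5 / 120) - Real.sin x := by
  apply pos_on_Ioo (f' := fun x => (1 - x ^ 2 / 2 + x ^ 4 / 24) - Real.cos x)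
  · intro x
    have h := (((hasDerivAt_id x).sub ((hasDerivAt_pow 3 x).div_const 6)).add
      ((hasDerivAt_pow 5 x).div_const 120)).sub (Real.hasDerivAt_sin x)
    refine h.congr_deriv ?_
    push_cast
    ring
  · simp
  · exact aux4

private lemma sin_mul_lt : ∀ x ∈ Set.Ioo (0:ℝ) π, Real.sin x * (6 + x ^ 2) < 6 * x := by
  intro x hx
  have h5 := aux5 x hx
  have hpi : x < 3.15 := hx.2.trans Real.pi_lt_d2
  have hx0 : 0 < x := hx.1
  have hq : (0:ℝ) < 14 - x ^ 2 := by nlinarith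
  have h6 := mul_pos h5 (show (0:ℝ) < 6 + x ^ 2 by positivity)
  have h7 := mul_pos (pow_pos hx0 5) hq
  nlinarith [h6, h7]

private lemma final_ineq (A B x : ℝ) (hA : 0 < A) (hB : 0 < B)
    (hx : x ∈ Set.Ioo (0:ℝ) π) (hBx : B < x ^ 2 / 4)
    (hkey2 : x * A ^ 2 = Real.sin x * B ^ 2) : 2 / 9 < 1 / A - 1 / B := by
  have hB2 : (0:ℝ) < B ^ 2 := pow_pos hB 2
  have hb1 := sin_mul_lt x hx
  have hx0 : 0 < x := hx.1
  have h3 : A ^ 2 * (6 + x ^ 2) < 6 * B ^ 2 := by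
    have hmul : Real.sin x * (6 + x ^ 2) * B ^ 2 < 6 * x * B ^ 2 :=
      mul_lt_mul_of_pos_right hb1 hB2
    have hrw : Real.sin x * (6 + x ^ 2) * B ^ 2 = x * (A ^ 2 * (6 + x ^ 2)) := by
      linear_combination (-(6 + x ^ 2)) * hkey2
    rw [hrw] at hmul
    nlinarith [hmul, hx0]
  obtain ⟨t, ht0, htB⟩ : ∃ t, 0 < t ∧ A = t * B :=
    ⟨A / B, div_pos hA hB, by field_simp⟩
  rw [htB] at h3
  have ht2 : t ^ 2 * (6 + x ^ 2) < 6 := by nlinarith [hB2]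
  have hx18 : x ^ 2 < 18 := by
    have h315 : x < 3.15 := hx.2.trans Real.pi_lt_d2
    nlinarith [hx0]
  have hc : t ^ 2 * (18 + x ^ 2) ^ 2 < 324 := by
    have hsq : (0:ℝ) < (18 + x ^ 2) ^ 2 := by positivity
    have h1' := mul_lt_mul_of_pos_right ht2 hsq
    have h2' : 0 ≤ x ^ 2 * (18 - x ^ 2) := mul_nonneg (sq_nonneg x) (by linarith)
    have hpos6 : (0:ℝ) < 6 + x ^ 2 := by positivity
    nlinarith [h1', h2', hpos6]
  have ht3 : t * (18 + x ^ 2) < 18 := by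
    have hp18 : (0:ℝ) < 18 + x ^ 2 := by positivity
    nlinarith [hc, mul_pos ht0 hp18]
  have h9 : t * x ^ 2 / 2 < 9 * (1 - t) := by nlinarith
  have h10 : 2 * (t * B) < t * x ^ 2 / 2 := by nlinarith
  have h11 : 2 * (t * B) < 9 * (1 - t) := by linarith
  have hfin : 1 / A - 1 / B = (B - A) / (A * B) := by
    field_simp
  rw [hfin, div_lt_div_iff₀ (by norm_num) (mul_pos hA hB), htB]
  nlinarith [mul_lt_mul_of_pos_left h11 hB]

theorem phie_critical_value_lower (μ θe : ℝ) (hμ0 : 0 < μ) (hμ1 : μ < 1)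
    (hθ : θe ∈ Set.Ioo (Real.arcsin μ) (π / 2))
    (hcrit : deriv (fun θ : ℝ => 1 / ((Real.sin θ) ^ 2 - μ ^ 2) - 1 / (θ ^ 2 - μ ^ 2)) θe = 0) :
    2 / 9 < 1 / ((Real.sin θe) ^ 2 - μ ^ 2) - 1 / (θe ^ 2 - μ ^ 2) := by
  obtain ⟨hθ1, hθ2⟩ := hθ
  have harc : 0 < Real.arcsin μ := Real.arcsin_pos.2 hμ0
  have hθ0 : 0 < θe := harc.trans hθ1
  have hsinθ : μ < Real.sin θe := by
    have hm1 : Real.arcsin μ ∈ Set.Icc (-(π/2)) (π/2) := Real.arcsin_mem_Icc μ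
    have hm2 : θe ∈ Set.Icc (-(π/2)) (π/2) := ⟨by linarith [Real.pi_pos], hθ2.le⟩
    have := Real.strictMonoOn_sin hm1 hm2 hθ1
    rwa [Real.sin_arcsin (by linarith) hμ1.le] at this
  have hsθpos : 0 < Real.sin θe := hμ0.trans hsinθ
  have hA : 0 < Real.sin θe ^ 2 - μ ^ 2 := by nlinarith
  have hslt : Real.sin θe < θe := Real.sin_lt hθ0
  have hB : 0 < θe ^ 2 - μ ^ 2 := by nlinarith
  set A := Real.sin θe ^ 2 - μ ^ 2 with hAdef
  set B := θe ^ 2 - μ ^ 2 with hBdef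
  have h1 : HasDerivAt (fun θ : ℝ => 1 / (Real.sin θ ^ 2 - μ ^ 2) - 1 / (θ ^ 2 - μ ^ 2))
      (-(2 * Real.sin θe * Real.cos θe) / A ^ 2 - -(2 * θe) / B ^ 2) θe := by
    have ha : HasDerivAt (fun θ : ℝ => Real.sin θ ^ 2 - μ ^ 2) (2 * Real.sin θe * Real.cos θe) θe := by
      have := ((Real.hasDerivAt_sin θe).pow 2).sub_const (μ ^ 2)
      refine this.congr_deriv ?_
      push_cast
      ring
    have hb : HasDerivAt (fun θ : ℝ => θ ^ 2 - μ ^ 2) (2 * θe) θe := by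
      have := (hasDerivAt_pow 2 θe).sub_const (μ ^ 2)
      refine this.congr_deriv ?_
      push_cast
      ring
    have := (ha.inv hA.ne').sub (hb.inv hB.ne')
    simpa [one_div, hAdef, hBdef, Pi.sub_def, Pi.inv_def] using this
  have heq : -(2 * Real.sin θe * Real.cos θe) / A ^ 2 - -(2 * θe) / B ^ 2 = 0 := by
    rw [← h1.deriv]; exact hcrit
  have hA2 : (0:ℝ) < A ^ 2 := pow_pos hA 2
  have hB2 : (0:ℝ) < B ^ 2 := pow_pos hB 2
  have hkey : 2 * θe * A ^ 2 = 2 * Real.sin θe * Real.cos θe * B ^ 2 := by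
    field_simp at heq
    linear_combination heq
  have hx : 2 * θe ∈ Set.Ioo (0:ℝ) π := ⟨by linarith, by linarith⟩
  have hBx : θe ^ 2 - μ ^ 2 < (2 * θe) ^ 2 / 4 := by nlinarith
  have hkey2 : (2 * θe) * A ^ 2 = Real.sin (2 * θe) * B ^ 2 := by
    rw [Real.sin_two_mul]; linear_combination hkey
  exact final_ineq A B (2 * θe) hA hB hx hBx hkey2
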